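/- Let X, V, W be complex Hilbert spaces and let {A, B, C, D} be a co-isometric system, i.e. A : X → X, B : V → X, C : X → W, D : V → W are bounded operators such that the block operator [[A, B], [C, D]] : X ⊕ V → X ⊕ W is a co-isometry. Then there exists a bounded linear operator T : ℓ²(ℕ, V) ⊕ X → ℓ²(ℕ, W) such that for every finitely supported sequence v = (v_i)_{i≥0} in V and every x ∈ X, the n-th component of T(v, x) equals D v_n + Σ_{i=0}^{n-1} C A^{n-1-i} B v_i + C Aⁿ x, and this operator T is a co-isometry. -/

import Mathlib

open scoped ENNReal
noncomputable section
set_option linter.unusedSectionVars false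
namespace Stmt5Aux

local notation "⟪" x ", " y "⟫" => @inner ℂ _ _ x y

variable {X V W : Type*}
  [NormedAddCommGroup X] [InnerProductSpace ℂ X] [CompleteSpace X]
  [NormedAddCommGroup V] [InnerProductSpace ℂ V] [CompleteSpace V]
  [NormedAddCommGroup W] [InnerProductSpace ℂ W] [CompleteSpace W]

def st (A : X →L[ℂ] X) (B : V →L[ℂ] X) (x : X) (v : ℕ → V) : ℕ → X
  | 0 => x
  | n + 1 => A (st A B x v n) + B (v n)

variable (A : X →L[ℂ] X) (B : V →L[ℂ] X) (C : X →L[ℂ] W) (D : V →L[ℂ] W)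

lemma st_closed (x : X) (v : ℕ → V) (n : ℕ) :
    st A B x v n = (A ^ n) x + ∑ i ∈ Finset.range n, (A ^ (n - 1 - i)) (B (v i)) := by
  induction n with
  | zero => simp [st]
  | succ n ih =>
      rw [st, ih, Finset.sum_range_succ]
      have h1 : ∀ i ∈ Finset.range n, (A ^ (n + 1 - 1 - i)) (B (v i)) =
          A ((A ^ (n - 1 - i)) (B (v i))) := by
        intro i hi
        rw [Finset.mem_range] at hi
        have : n + 1 - 1 - i = (n - 1 - i) + 1 := by omega
        rw [this, pow_succ']
        rfl
      rw [Finset.sum_congr rfl h1]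
      have h0 : (A ^ (n + 1 - 1 - n)) (B (v n)) = B (v n) := by
        have : n + 1 - 1 - n = 0 := by omega
        simp [this]
      rw [h0]
      simp only [map_add, map_sum]
      have : (A ^ (n + 1)) x = A ((A ^ n) x) := by rw [pow_succ']; rfl
      rw [this]
      abel


lemma inner_st (x : X) (v : ℕ → V) (y : X) (m : ℕ) :
    ⟪st A B x v m, y⟫ = ⟪x, ((ContinuousLinearMap.adjoint A) ^ m) y⟫ +
      ∑ i ∈ Finset.range m,
        ⟪v i, (ContinuousLinearMap.adjoint B)
          (((ContinuousLinearMap.adjoint A) ^ (m - 1 - i)) y)⟫ := by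
  induction m generalizing y with
  | zero => simp [st]
  | succ m ih =>
      rw [st, inner_add_left, Finset.sum_range_succ]
      have hA : ⟪A (st A B x v m), y⟫ = ⟪st A B x v m, (ContinuousLinearMap.adjoint A) y⟫ := by
        rw [ContinuousLinearMap.adjoint_inner_right]
      have hB : ⟪B (v m), y⟫ = ⟪v m, (ContinuousLinearMap.adjoint B) y⟫ := by
        rw [ContinuousLinearMap.adjoint_inner_right]
      rw [hA, hB, ih]
      have e1 : ((ContinuousLinearMap.adjoint A) ^ m) ((ContinuousLinearMap.adjoint A) y) =
          ((ContinuousLinearMap.adjoint A) ^ (m + 1)) y := by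
        rw [pow_succ]; rfl
      have e2 : ∀ i ∈ Finset.range m,
          ⟪v i, (ContinuousLinearMap.adjoint B)
            (((ContinuousLinearMap.adjoint A) ^ (m - 1 - i)) ((ContinuousLinearMap.adjoint A) y))⟫
          = ⟪v i, (ContinuousLinearMap.adjoint B)
            (((ContinuousLinearMap.adjoint A) ^ (m + 1 - 1 - i)) y)⟫ := by
        intro i hi
        rw [Finset.mem_range] at hi
        have : m + 1 - 1 - i = (m - 1 - i) + 1 := by omega
        rw [this, pow_succ]
        rfl
      rw [Finset.sum_congr rfl e2, e1]
      have : m + 1 - 1 - m = 0 := by omega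
      rw [this]
      simp only [pow_zero, ContinuousLinearMap.one_apply]
      abel


def out (x : X) (v : ℕ → V) (n : ℕ) : W := C (st A B x v n) + D (v n)

lemma sum_out_le
    (hc : ∀ (x : X) (v : V), ‖A x + B v‖ ^ 2 + ‖C x + D v‖ ^ 2 ≤ ‖x‖ ^ 2 + ‖v‖ ^ 2)
    (x : X) (v : ℕ → V) (N : ℕ) :
    ∑ n ∈ Finset.range N, ‖out A B C D x v n‖ ^ 2 + ‖st A B x v N‖ ^ 2 ≤
      ‖x‖ ^ 2 + ∑ n ∈ Finset.range N, ‖v n‖ ^ 2 := by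
  induction N with
  | zero => simp [st]
  | succ N ih =>
      have h := hc (st A B x v N) (v N)
      rw [Finset.sum_range_succ, Finset.sum_range_succ]
      have e1 : st A B x v (N + 1) = A (st A B x v N) + B (v N) := rfl
      have e2 : out A B C D x v N = C (st A B x v N) + D (v N) := rfl
      rw [e1, e2]
      linarith

lemma memℓp_out
    (hc : ∀ (x : X) (v : V), ‖A x + B v‖ ^ 2 + ‖C x + D v‖ ^ 2 ≤ ‖x‖ ^ 2 + ‖v‖ ^ 2)
    (x : X) (v : lp (fun _ : ℕ => V) 2) :
    Memℓp (out A B C D x ⇑v) 2 := by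
  have hsv : Summable (fun n => ‖v n‖ ^ (2:ℕ)) := by
    have := ((lp.memℓp v).summable (by norm_num : 0 < (2:ℝ≥0∞).toReal))
    have h2 : ((2:ℝ≥0∞).toReal) = ((2:ℕ):ℝ) := by norm_num
    rw [h2] at this
    simpa [Real.rpow_natCast] using this
  apply memℓp_gen'
    (C := ‖x‖ ^ 2 + ∑' n, ‖v n‖ ^ (2:ℕ))
  intro s
  have h2 : ((2:ℝ≥0∞).toReal) = ((2:ℕ):ℝ) := by norm_num
  simp only [h2, Real.rpow_natCast]
  obtain ⟨N, hN⟩ : ∃ N, s ⊆ Finset.range N :=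
    ⟨(s.sup id) + 1, fun i hi => Finset.mem_range.mpr (Nat.lt_succ_of_le (Finset.le_sup (f := id) hi))⟩
  calc ∑ i ∈ s, ‖out A B C D x (⇑v) i‖ ^ (2:ℕ)
      ≤ ∑ i ∈ Finset.range N, ‖out A B C D x (⇑v) i‖ ^ (2:ℕ) :=
        Finset.sum_le_sum_of_subset_of_nonneg hN (fun i _ _ => by positivity)
    _ ≤ ‖x‖ ^ 2 + ∑ n ∈ Finset.range N, ‖v n‖ ^ 2 := by
        have := sum_out_le A B C D hc x (⇑v) N
        have h0 : (0:ℝ) ≤ ‖st A B x (⇑v) N‖ ^ 2 := by positivity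
        linarith
    _ ≤ ‖x‖ ^ 2 + ∑' n, ‖v n‖ ^ (2:ℕ) := by
        gcongr
        exact Summable.sum_le_tsum _ (fun n _ => by positivity) hsv

def Tlin
    (hc : ∀ (x : X) (v : V), ‖A x + B v‖ ^ 2 + ‖C x + D v‖ ^ 2 ≤ ‖x‖ ^ 2 + ‖v‖ ^ 2) :
    WithLp 2 ((lp (fun _ : ℕ => V) 2) × X) →ₗ[ℂ] lp (fun _ : ℕ => W) 2 where
  toFun u := ⟨out A B C D u.snd ⇑u.fst, memℓp_out A B C D hc u.snd u.fst⟩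
  map_add' u u' := by
    apply Subtype.ext
    funext n
    have hv : ⇑((u + u').fst) = fun i => u.fst i + u'.fst i := by
      have : (u + u').fst = u.fst + u'.fst := rfl
      rw [this, lp.coeFn_add]; rfl
    have hx : (u + u').snd = u.snd + u'.snd := rfl
    simp only [out, hv, hx]
    have hst : ∀ m, st A B (u.snd + u'.snd) (fun i => u.fst i + u'.fst i) m =
        st A B u.snd (⇑u.fst) m + st A B u'.snd (⇑u'.fst) m := by
      intro m
      induction m with
      | zero => simp [st]
      | succ m ih => simp only [st, ih, map_add]; abel
    show C (st A B (u.snd + u'.snd) (fun i => u.fst i + u'.fst i) n) + D (u.fst n + u'.fst n) = _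
    rw [hst, map_add, map_add]
    show _ = (C (st A B u.snd (⇑u.fst) n) + D (u.fst n)) + (C (st A B u'.snd (⇑u'.fst) n) + D (u'.fst n))
    abel
  map_smul' c u := by
    apply Subtype.ext
    funext n
    have hv : ⇑((c • u).fst) = fun i => c • u.fst i := by
      have : (c • u).fst = c • u.fst := rfl
      rw [this, lp.coeFn_smul]; rfl
    have hx : (c • u).snd = c • u.snd := rfl
    simp only [out, hv, hx]
    have hst : ∀ m, st A B (c • u.snd) (fun i => c • u.fst i) m = c • st A B u.snd (⇑u.fst) m := by
      intro m
      induction m with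
      | zero => simp [st]
      | succ m ih => simp only [st, ih, map_smul, smul_add]
    show C (st A B (c • u.snd) (fun i => c • u.fst i) n) + D (c • u.fst n) = _
    rw [hst, map_smul, map_smul]
    show _ = c • (C (st A B u.snd (⇑u.fst) n) + D (u.fst n))
    rw [smul_add]

lemma sq_le_sq_imp {a b : ℝ} (ha : 0 ≤ a) (hb : 0 ≤ b) (h : a ^ 2 ≤ b ^ 2) : a ≤ b := by
  nlinarith

def Tclm
    (hc : ∀ (x : X) (v : V), ‖A x + B v‖ ^ 2 + ‖C x + D v‖ ^ 2 ≤ ‖x‖ ^ 2 + ‖v‖ ^ 2) :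
    WithLp 2 ((lp (fun _ : ℕ => V) 2) × X) →L[ℂ] lp (fun _ : ℕ => W) 2 := by
  refine LinearMap.mkContinuous (Tlin A B C D hc) 1 (fun u => ?_)
  rw [one_mul]
  have h2 : ((2:ℝ≥0∞).toReal) = ((2:ℕ):ℝ) := by norm_num
  have hnormT : ‖Tlin A B C D hc u‖ ^ (2:ℕ) = ∑' n, ‖out A B C D u.snd (⇑u.fst) n‖ ^ (2:ℕ) := by
    have := lp.norm_rpow_eq_tsum (p := 2) (by norm_num) (Tlin A B C D hc u)
    rw [h2] at this
    simp only [Real.rpow_natCast] at this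
    exact this
  have hnormv : ‖u.fst‖ ^ (2:ℕ) = ∑' n, ‖u.fst n‖ ^ (2:ℕ) := by
    have := lp.norm_rpow_eq_tsum (p := 2) (by norm_num) u.fst
    rw [h2] at this
    simpa [Real.rpow_natCast] using this
  have hsv : Summable (fun n => ‖u.fst n‖ ^ (2:ℕ)) := by
    have := ((lp.memℓp u.fst).summable (by norm_num : 0 < (2:ℝ≥0∞).toReal))
    rw [h2] at this
    simpa [Real.rpow_natCast] using this
  have hsout : Summable (fun n => ‖out A B C D u.snd (⇑u.fst) n‖ ^ (2:ℕ)) := by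
    have := (memℓp_out A B C D hc u.snd u.fst).summable (by norm_num : 0 < (2:ℝ≥0∞).toReal)
    rw [h2] at this
    simpa [Real.rpow_natCast] using this
  have hsq : ‖Tlin A B C D hc u‖ ^ 2 ≤ ‖u‖ ^ 2 := by
    rw [WithLp.prod_norm_sq_eq_of_L2, hnormT, hnormv]
    refine Summable.tsum_le_of_sum_range_le hsout (fun N => ?_)
    have h1 := sum_out_le A B C D hc u.snd (⇑u.fst) N
    have h0 : (0:ℝ) ≤ ‖st A B u.snd (⇑u.fst) N‖ ^ 2 := by positivity
    have h3 : ∑ n ∈ Finset.range N, ‖u.fst n‖ ^ 2 ≤ ∑' n, ‖u.fst n‖ ^ (2:ℕ) :=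
      Summable.sum_le_tsum _ (fun n _ => by positivity) hsv
    calc ∑ n ∈ Finset.range N, ‖out A B C D u.snd (⇑u.fst) n‖ ^ 2
        ≤ ‖u.snd‖ ^ 2 + ∑ n ∈ Finset.range N, ‖u.fst n‖ ^ 2 := by linarith
      _ ≤ ‖u.snd‖ ^ 2 + ∑' n, ‖u.fst n‖ ^ (2:ℕ) := by linarith
      _ = ‖u.fst‖ ^ 2 + ‖u.snd‖ ^ 2 := by rw [hnormv]; ring
      _ = ∑' n, ‖u.fst n‖ ^ (2:ℕ) + ‖u.snd‖ ^ 2 := by rw [hnormv]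
  exact sq_le_sq_imp (norm_nonneg _) (norm_nonneg _) (by
    rw [WithLp.prod_norm_sq_eq_of_L2, hnormT, hnormv] at hsq ⊢
    linarith)

lemma Tclm_apply
    (hc : ∀ (x : X) (v : V), ‖A x + B v‖ ^ 2 + ‖C x + D v‖ ^ 2 ≤ ‖x‖ ^ 2 + ‖v‖ ^ 2)
    (u : WithLp 2 ((lp (fun _ : ℕ => V) 2) × X)) (n : ℕ) :
    (Tclm A B C D hc u : ∀ _ : ℕ, W) n = C (st A B u.snd (⇑u.fst) n) + D (u.fst n) := rfl

end Stmt5Aux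


set_option maxHeartbeats 1000000 in
open Stmt5Aux in
/-- if `{A, B, C, D}` is a co-isometric system, then the operator
`[T_F, Γ̃_W] : ℓ²(ℕ, V) ⊕ X → ℓ²(ℕ, W)` given on finitely supported sequences by
`(v, x) ↦ (D vₙ + Σ_{i<n} C A^{n-1-i} B vᵢ + C Aⁿ x)ₙ` exists and is a co-isometry. -/
theorem stmt_5
    {X V W : Type*}
    [NormedAddCommGroup X] [InnerProductSpace ℂ X] [CompleteSpace X]
    [NormedAddCommGroup V] [InnerProductSpace ℂ V] [CompleteSpace V]
    [NormedAddCommGroup W] [InnerProductSpace ℂ W] [CompleteSpace W]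
    (A : X →L[ℂ] X) (B : V →L[ℂ] X) (C : X →L[ℂ] W) (D : V →L[ℂ] W)
    (S : WithLp 2 (X × V) →L[ℂ] WithLp 2 (X × W))
    (hS : ∀ (x : X) (v : V),
      S ((WithLp.equiv 2 (X × V)).symm (x, v)) =
        (WithLp.equiv 2 (X × W)).symm (A x + B v, C x + D v))
    (hScoiso : S.comp S.adjoint = 1) :
    ∃ T : WithLp 2 ((lp (fun _ : ℕ => V) 2) × X) →L[ℂ] lp (fun _ : ℕ => W) 2,
      (∀ (v : ℕ → V) (hfin : Set.Finite (Function.support v)) (hv : Memℓp v 2)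
          (x : X) (n : ℕ),
        T ((WithLp.equiv 2 ((lp (fun _ : ℕ => V) 2) × X)).symm (⟨v, hv⟩, x)) n =
          D (v n) + (∑ i ∈ Finset.range n, C ((A ^ (n - 1 - i)) (B (v i)))) +
            C ((A ^ n) x)) ∧
      T.comp T.adjoint = 1 := by
  classical
  have hSS : ∀ z, S (S.adjoint z) = z := fun z => by
    have := ContinuousLinearMap.ext_iff.mp hScoiso z
    simpa using this
  -- norm of S
  have hSadj_norm : ∀ z, ‖S.adjoint z‖ = ‖z‖ := by
    intro z
    have h1 : (inner ℂ (S.adjoint z) (S.adjoint z) : ℂ) = inner ℂ z z := by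
      rw [ContinuousLinearMap.adjoint_inner_left]
      rw [hSS]
    have h2 : ‖S.adjoint z‖ ^ 2 = ‖z‖ ^ 2 := by
      rw [← inner_self_eq_norm_sq (𝕜 := ℂ), ← inner_self_eq_norm_sq (𝕜 := ℂ)]
      exact congrArg Complex.re h1
    exact le_antisymm (sq_le_sq_imp (norm_nonneg _) (norm_nonneg _) (le_of_eq h2))
      (sq_le_sq_imp (norm_nonneg _) (norm_nonneg _) (le_of_eq h2.symm))

  have hSnorm : ∀ z, ‖S z‖ ≤ ‖z‖ := by
    intro z
    calc ‖S z‖ ≤ ‖S‖ * ‖z‖ := S.le_opNorm z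
      _ ≤ 1 * ‖z‖ := by
          gcongr
          rw [← LinearIsometryEquiv.norm_map ContinuousLinearMap.adjoint S]
          exact ContinuousLinearMap.opNorm_le_bound _ zero_le_one
            (fun z => by rw [hSadj_norm, one_mul])
      _ = ‖z‖ := one_mul _
  have hc : ∀ (x : X) (v : V), ‖A x + B v‖ ^ 2 + ‖C x + D v‖ ^ 2 ≤ ‖x‖ ^ 2 + ‖v‖ ^ 2 := by
    intro x v
    have h := hSnorm ((WithLp.equiv 2 (X × V)).symm (x, v))
    rw [hS] at h
    have h2 := pow_le_pow_left₀ (norm_nonneg _) h 2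
    simp only [WithLp.prod_norm_sq_eq_of_L2, WithLp.equiv_symm_apply,
      WithLp.toLp_fst, WithLp.toLp_snd] at h2
    exact h2
  -- explicit adjoint of S and the four block relations
  have hprodeq : ∀ u : WithLp 2 (X × V), (WithLp.equiv 2 (X × V)).symm (u.fst, u.snd) = u := fun u => rfl
  have hSadj : ∀ (x : X) (w : W),
      S.adjoint ((WithLp.equiv 2 (X × W)).symm (x, w)) =
        (WithLp.equiv 2 (X × V)).symm
          (ContinuousLinearMap.adjoint A x + ContinuousLinearMap.adjoint C w,
           ContinuousLinearMap.adjoint B x + ContinuousLinearMap.adjoint D w) := by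
    intro x w
    apply ext_inner_left ℂ
    intro u
    rw [ContinuousLinearMap.adjoint_inner_right]
    have hu : S u = (WithLp.equiv 2 (X × W)).symm (A u.fst + B u.snd, C u.fst + D u.snd) := by
      exact hS u.fst u.snd
    rw [hu, WithLp.prod_inner_apply, WithLp.prod_inner_apply]
    simp only [WithLp.equiv_symm_apply, WithLp.ofLp_toLp, WithLp.ofLp_fst, WithLp.ofLp_snd, inner_add_left, inner_add_right,
      ContinuousLinearMap.adjoint_inner_right]
    ring
  have hblock : ∀ (x : X) (w : W),
      (A (ContinuousLinearMap.adjoint A x + ContinuousLinearMap.adjoint C w) +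
        B (ContinuousLinearMap.adjoint B x + ContinuousLinearMap.adjoint D w) = x) ∧
      (C (ContinuousLinearMap.adjoint A x + ContinuousLinearMap.adjoint C w) +
        D (ContinuousLinearMap.adjoint B x + ContinuousLinearMap.adjoint D w) = w) := by
    intro x w
    have h := hSS ((WithLp.equiv 2 (X × W)).symm (x, w))
    rw [hSadj, hS] at h
    have h1 := congrArg (fun z => ((WithLp.equiv 2 (X × W)) z).1) h
    have h2 := congrArg (fun z => ((WithLp.equiv 2 (X × W)) z).2) h
    simp only [Equiv.apply_symm_apply] at h1 h2
    exact ⟨h1, h2⟩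
  have rel1 : ∀ x : X, A (ContinuousLinearMap.adjoint A x) + B (ContinuousLinearMap.adjoint B x) = x := by
    intro x; have := (hblock x 0).1; simpa using this
  have rel2 : ∀ w : W, A (ContinuousLinearMap.adjoint C w) + B (ContinuousLinearMap.adjoint D w) = 0 := by
    intro w; have := (hblock 0 w).1; simpa using this
  have rel3 : ∀ x : X, C (ContinuousLinearMap.adjoint A x) + D (ContinuousLinearMap.adjoint B x) = 0 := by
    intro x; have := (hblock x 0).2; simpa using this
  have rel4 : ∀ w : W, C (ContinuousLinearMap.adjoint C w) + D (ContinuousLinearMap.adjoint D w) = w := by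
    intro w; have := (hblock 0 w).2; simpa using this
  -- the operator
  refine ⟨Tclm A B C D hc, ?_, ?_⟩
  · -- the formula
    intro v hfin hv x n
    have h := Tclm_apply A B C D hc
      ((WithLp.equiv 2 ((lp (fun _ : ℕ => V) 2) × X)).symm (⟨v, hv⟩, x)) n
    rw [h, st_closed]
    show C ((A ^ n) x + ∑ i ∈ Finset.range n, (A ^ (n - 1 - i)) (B (v i))) + D (v n) = _
    rw [map_add, map_sum]
    abel
  · -- co-isometry
    have hTT : ∀ (k : ℕ) (w0 : W),
        Tclm A B C D hc ((Tclm A B C D hc).adjoint (lp.single 2 k w0)) = lp.single 2 k w0 := by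
      intro k w0
      set Aa := ContinuousLinearMap.adjoint A
      set Ba := ContinuousLinearMap.adjoint B
      set Ca := ContinuousLinearMap.adjoint C
      set Da := ContinuousLinearMap.adjoint D
      set vf : ℕ → V := fun n =>
        if n < k then Ba ((Aa ^ (k - 1 - n)) (Ca w0)) else if n = k then Da w0 else 0 with hvf
      have hvf0 : ∀ n, k + 1 ≤ n → vf n = 0 := by
        intro n hn
        simp only [hvf]
        rw [if_neg (show ¬ n < k by omega), if_neg (show ¬ n = k by omega)]
      have hmem : Memℓp vf 2 := by
        apply memℓp_gen
        apply summable_of_ne_finset_zero (s := Finset.range (k + 1))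
        intro n hn
        rw [Finset.mem_range, not_lt] at hn
        rw [hvf0 n hn]
        simp
      set cand : WithLp 2 ((lp (fun _ : ℕ => V) 2) × X) :=
        (WithLp.equiv 2 _).symm (⟨vf, hmem⟩, (Aa ^ k) (Ca w0)) with hcand
      have hadj : (Tclm A B C D hc).adjoint (lp.single 2 k w0) = cand := by
        apply ext_inner_left ℂ
        intro u
        rw [ContinuousLinearMap.adjoint_inner_right]
        have hTk : (inner ℂ (Tclm A B C D hc u) (lp.single 2 k w0) : ℂ)
            = inner ℂ (st A B u.snd (⇑u.fst) k) (Ca w0) + inner ℂ (u.fst k) (Da w0) := by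
          rw [lp.inner_single_right]
          rw [Tclm_apply, inner_add_left, ContinuousLinearMap.adjoint_inner_right,
            ContinuousLinearMap.adjoint_inner_right]
        rw [hTk, inner_st]
        have hR : (inner ℂ u cand : ℂ) =
            (∑ i ∈ Finset.range k, inner ℂ (u.fst i) (Ba ((Aa ^ (k - 1 - i)) (Ca w0))))
              + inner ℂ (u.fst k) (Da w0) + inner ℂ u.snd ((Aa ^ k) (Ca w0)) := by
          rw [hcand, WithLp.prod_inner_apply]
          simp only [WithLp.equiv_symm_apply, WithLp.ofLp_toLp, WithLp.ofLp_fst, WithLp.ofLp_snd]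
          have h1 : (inner ℂ u.fst (⟨vf, hmem⟩ : lp (fun _ : ℕ => V) 2) : ℂ)
              = ∑' n, inner ℂ (u.fst n) (vf n) := lp.inner_eq_tsum u.fst _
          rw [h1, tsum_eq_sum (s := Finset.range (k + 1))
            (fun n hn => by
              rw [Finset.mem_range, not_lt] at hn
              rw [hvf0 n hn, inner_zero_right]),
            Finset.sum_range_succ]
          have h2 : ∀ i ∈ Finset.range k,
              (inner ℂ (u.fst i) (vf i) : ℂ) = inner ℂ (u.fst i) (Ba ((Aa ^ (k - 1 - i)) (Ca w0))) := by
            intro i hi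
            rw [Finset.mem_range] at hi
            simp only [hvf]
            rw [if_pos hi]
          have h3 : vf k = Da w0 := by
            simp only [hvf]
            simp
          rw [Finset.sum_congr rfl h2, h3]
        rw [hR]
        ring
      rw [hadj]
      -- compute T cand componentwise
      have hcand1 : ⇑(cand.fst) = vf := rfl
      have hcand2 : cand.snd = (Aa ^ k) (Ca w0) := rfl
      have hpow : ∀ m, (Aa ^ (m + 1)) (Ca w0) = Aa ((Aa ^ m) (Ca w0)) := by
        intro m; rw [pow_succ']; rfl
      have hst2 : ∀ n, st A B ((Aa ^ k) (Ca w0)) vf n =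
          if n ≤ k then (Aa ^ (k - n)) (Ca w0) else 0 := by
        intro n
        induction n with
        | zero => simp [Stmt5Aux.st]
        | succ n ih =>
            have hrec : st A B ((Aa ^ k) (Ca w0)) vf (n + 1)
                = A (st A B ((Aa ^ k) (Ca w0)) vf n) + B (vf n) := rfl
            rw [hrec, ih]
            by_cases h1 : n < k
            · rw [if_pos (le_of_lt h1), if_pos (show n + 1 ≤ k by omega),
                show k - (n + 1) = k - 1 - n from by omega]
              have e : (Aa ^ (k - n)) (Ca w0) = Aa ((Aa ^ (k - 1 - n)) (Ca w0)) := by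
                rw [show k - n = (k - 1 - n) + 1 from by omega, hpow]
              have hv : vf n = Ba ((Aa ^ (k - 1 - n)) (Ca w0)) := by
                simp only [hvf]; rw [if_pos h1]
              rw [e, hv, rel1]
            · by_cases h2 : n = k
              · subst h2
                rw [if_pos (le_refl n), if_neg (show ¬ n + 1 ≤ n by omega)]
                have hv : vf n = Da w0 := by
                  simp only [hvf]; simp
                rw [hv, Nat.sub_self, pow_zero]
                exact rel2 w0
              · rw [if_neg (show ¬ n ≤ k by omega), if_neg (show ¬ n + 1 ≤ k by omega)]
                have hv : vf n = 0 := hvf0 n (by omega)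
                rw [hv, map_zero, map_zero, add_zero]
      apply Subtype.ext
      funext n
      have h := Tclm_apply A B C D hc cand n
      rw [h, hcand1, hcand2, hst2]
      by_cases h1 : n < k
      · rw [if_pos (le_of_lt h1)]
        have hv : vf n = Ba ((Aa ^ (k - 1 - n)) (Ca w0)) := by
          simp only [hvf]; rw [if_pos h1]
        have e : (Aa ^ (k - n)) (Ca w0) = Aa ((Aa ^ (k - 1 - n)) (Ca w0)) := by
          rw [show k - n = (k - 1 - n) + 1 by omega, hpow]
        rw [e, hv, rel3]
        rw [lp.single_apply, Pi.single_apply, if_neg (show ¬ n = k from by omega)]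
      · by_cases h2 : n = k
        · subst h2
          rw [if_pos (le_refl n), Nat.sub_self, pow_zero]
          have hv : vf n = Da w0 := by
            simp only [hvf]; simp
          rw [hv]
          show C (Ca w0) + D (Da w0) = _
          rw [rel4]
          simp [lp.single_apply]
        · rw [if_neg (by omega)]
          have hv : vf n = 0 := hvf0 n (by omega)
          rw [hv, map_zero, map_zero, add_zero, lp.single_apply,
            Pi.single_apply, if_neg (show ¬ n = k from by omega)]
    -- density of singles
    have hdense : Dense
        ((Submodule.span ℂ {f : lp (fun _ : ℕ => W) 2 | ∃ k w0, f = lp.single 2 k w0} :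
          Submodule ℂ (lp (fun _ : ℕ => W) 2)) : Set (lp (fun _ : ℕ => W) 2)) := by
      intro f
      refine mem_closure_of_tendsto (lp.hasSum_single (by norm_num) f)
        (Filter.Eventually.of_forall fun t => ?_)
      exact Submodule.sum_mem _ fun k _ => Submodule.subset_span ⟨k, f k, rfl⟩
    apply ContinuousLinearMap.ext_on hdense
    rintro f ⟨k, w0, rfl⟩
    simpa using hTT k w0
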